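/- Let C be a cocomplete category. The left adjoint (σ_a)_!: Fun((Δ_a × Δ_a)ᵒᵖ, C) → Fun(Δ_aᵒᵖ, C) of the restriction functor (σ_a)* along the ordinal sum is given levelwise on an object A by ((σ_a)_!A)_k ≅ ∐_{i=−1}^{k} A_{i, k−i−1}; for a morphism β: [l] → [k] in Δ_a, the induced structure map acts on the i-th summand A_{i,k−i−1} as the structure map of A induced by the unique pair (β₁: [j_β(i)] → [i], β₂: [l−j_β(i)−1] → [k−i−1]) with σ_a(β₁, β₂) = β, landing in the j_β(i)-th summand A_{j_β(i), l−j_β(i)−1}. -/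

import Mathlib

open CategoryTheory CategoryTheory.Limits Simplicial Opposite

universe v u

namespace OrdSum

/-- The "ordinal sum" of two monotone maps between finite linear orders. -/
def ordJoin {m n m' n' : ℕ} (f : Fin m →o Fin m') (g : Fin n →o Fin n') :
    Fin (m + n) →o Fin (m' + n') where
  toFun i :=
    if h : (i : ℕ) < m then Fin.castAdd n' (f ⟨i, h⟩)
    else Fin.natAdd m' (g ⟨(i : ℕ) - m, by omega⟩)
  monotone' := by
    intro i j hij
    have hij' : (i : ℕ) ≤ (j : ℕ) := hij
    dsimp only
    by_cases hi : (i : ℕ) < m <;> by_cases hj : (j : ℕ) < m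
    · simp only [dif_pos hi, dif_pos hj, Fin.le_def, Fin.coe_castAdd]
      exact f.monotone (show (⟨(i:ℕ), hi⟩ : Fin m) ≤ ⟨(j:ℕ), hj⟩ from hij')
    · simp only [dif_pos hi, dif_neg hj, Fin.le_def, Fin.coe_castAdd, Fin.coe_natAdd]
      have := (f ⟨(i:ℕ), hi⟩).isLt
      omega
    · omega
    · simp only [dif_neg hi, dif_neg hj, Fin.le_def, Fin.coe_natAdd]
      have : (⟨(i:ℕ) - m, by omega⟩ : Fin n) ≤ ⟨(j:ℕ) - m, by omega⟩ := by
        simp only [Fin.mk_le_mk]; omega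
      have := g.monotone this
      omega

theorem ordJoin_id (m n : ℕ) :
    ordJoin (OrderHom.id (α := Fin m)) (OrderHom.id (α := Fin n)) = OrderHom.id := by
  ext i
  simp only [ordJoin, OrderHom.coe_mk, OrderHom.id_coe, id_eq]
  by_cases h : (i : ℕ) < m
  · simp [dif_pos h]
  · simp only [dif_neg h, Fin.coe_natAdd]
    omega

theorem ordJoin_comp {m n m' n' m'' n'' : ℕ}
    (f : Fin m →o Fin m') (g : Fin n →o Fin n')
    (f' : Fin m' →o Fin m'') (g' : Fin n' →o Fin n'') :
    ordJoin (f'.comp f) (g'.comp g) = (ordJoin f' g').comp (ordJoin f g) := by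
  ext i
  have e1 : ∀ {a b a' b' : ℕ} (F : Fin a →o Fin a') (G : Fin b →o Fin b') (x : Fin (a + b)),
      ordJoin F G x = if h : (x : ℕ) < a then Fin.castAdd b' (F ⟨x, h⟩)
        else Fin.natAdd a' (G ⟨(x : ℕ) - a, by omega⟩) := fun _ _ _ => rfl
  simp only [e1, OrderHom.comp_coe, Function.comp_apply]
  by_cases h : (i : ℕ) < m
  · have h1 : ((Fin.castAdd n' (f ⟨(i:ℕ), h⟩)) : ℕ) < m' := (f ⟨(i:ℕ), h⟩).isLt
    simp only [dif_pos h, dif_pos h1]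
    congr 1
  · have h1 : ¬ ((Fin.natAdd m' (g ⟨(i:ℕ) - m, by omega⟩)) : ℕ) < m' := by
      simp only [Fin.coe_natAdd]; omega
    simp only [dif_neg h]
    rw [dif_neg h1]
    simp only [OrderHom.comp_coe, Function.comp_apply, Fin.coe_natAdd, Nat.add_right_cancel_iff]
    congr 2
    apply Fin.ext
    simp

/-- The ordinal sum functor `σ : Δ × Δ → Δ`, `([k],[l]) ↦ [k+1+l]`. -/
def ordSum : SimplexCategory × SimplexCategory ⥤ SimplexCategory where
  obj x := SimplexCategory.mk (x.1.len + 1 + x.2.len)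
  map {x y} f := SimplexCategory.Hom.mk
    (ordJoin (m := x.1.len + 1) (n := x.2.len + 1) (m' := y.1.len + 1) (n' := y.2.len + 1)
      f.1.toOrderHom f.2.toOrderHom)
  map_id x := by
    apply SimplexCategory.Hom.ext
    simp only [SimplexCategory.Hom.toOrderHom_mk]
    exact ordJoin_id _ _
  map_comp {x y z} f g := by
    apply SimplexCategory.Hom.ext
    simp only [SimplexCategory.Hom.toOrderHom_mk]
    exact ordJoin_comp _ _ _ _

/-- The augmented simplex category `Δₐ`: the object `⟨n⟩` is the linear order with `n`
elements (so `⟨0⟩` is `[-1] = ∅` and `⟨n+1⟩` is `[n]`); morphisms are monotone maps. -/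
@[ext] structure AugSimplex where
  len : ℕ

instance : Category.{0} AugSimplex where
  Hom a b := Fin a.len →o Fin b.len
  id _ := OrderHom.id
  comp f g := g.comp f

/-- The inclusion `ι : Δ → Δₐ`. -/
def incl : SimplexCategory ⥤ AugSimplex where
  obj x := ⟨x.len + 1⟩
  map f := f.toOrderHom
  map_id _ := rfl
  map_comp _ _ := rfl

/-- The ordinal sum functor `σₐ : Δₐ × Δₐ → Δₐ`. -/
def ordSumAug : AugSimplex × AugSimplex ⥤ AugSimplex where
  obj x := ⟨x.1.len + x.2.len⟩
  map f := ordJoin f.1 f.2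
  map_id _ := ordJoin_id _ _
  map_comp _ _ := ordJoin_comp _ _ _ _

variable {C : Type u} [Category.{v} C]

variable (C) in
/-- Total décalage `σ* : Fun(Δᵒᵖ, C) ⥤ Fun((Δ×Δ)ᵒᵖ, C)`, precomposition with ordinal sum. -/
def decF : (SimplexCategoryᵒᵖ ⥤ C) ⥤ ((SimplexCategory × SimplexCategory)ᵒᵖ ⥤ C) :=
  (Functor.whiskeringLeft _ _ C).obj ordSum.op

variable (C) in
/-- The functor sending a bisimplicial object `Y` to `[k] ↦ Y_{k,−}`. -/
def rowsF : ((SimplexCategory × SimplexCategory)ᵒᵖ ⥤ C) ⥤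
    (SimplexCategoryᵒᵖ ⥤ (SimplexCategoryᵒᵖ ⥤ C)) :=
  (Functor.whiskeringLeft _ _ C).obj
    (prodOpEquiv (C := SimplexCategory) (D := SimplexCategory)).inverse ⋙ Functor.curry

variable (C) in
/-- The functor sending a bisimplicial object `Y` to `[k] ↦ Y_{−,k}`. -/
def colsF : ((SimplexCategory × SimplexCategory)ᵒᵖ ⥤ C) ⥤
    (SimplexCategoryᵒᵖ ⥤ (SimplexCategoryᵒᵖ ⥤ C)) :=
  (Functor.whiskeringLeft _ _ C).obj
    (CategoryTheory.Prod.swap SimplexCategoryᵒᵖ SimplexCategoryᵒᵖ ⋙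
      (prodOpEquiv (C := SimplexCategory) (D := SimplexCategory)).inverse) ⋙ Functor.curry

/-- The simplicial object `Y_{k,−}`. -/
def rowS (Y : (SimplexCategory × SimplexCategory)ᵒᵖ ⥤ C) (k : SimplexCategory) :
    SimplexCategoryᵒᵖ ⥤ C :=
  ((rowsF C).obj Y).obj (op k)

/-- The simplicial object `Y_{−,k}`. -/
def colS (Y : (SimplexCategory × SimplexCategory)ᵒᵖ ⥤ C) (k : SimplexCategory) :
    SimplexCategoryᵒᵖ ⥤ C :=
  ((colsF C).obj Y).obj (op k)

/-- `π₀` of a simplicial object: the coequalizer of the two face maps `X₁ ⇉ X₀`. -/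
noncomputable def pi0F [HasCoequalizers C] : (SimplexCategoryᵒᵖ ⥤ C) ⥤ C where
  obj X := coequalizer (X.map (SimplexCategory.δ (1 : Fin 2)).op)
    (X.map (SimplexCategory.δ (0 : Fin 2)).op)
  map {X Y} f := coequalizer.desc (f.app (op ⦋0⦌) ≫ coequalizer.π _ _) (by
    rw [← Category.assoc, ← Category.assoc, f.naturality, f.naturality,
      Category.assoc, Category.assoc, coequalizer.condition])
  map_id X := by
    apply coequalizer.hom_ext
    simp
  map_comp f g := by
    apply coequalizer.hom_ext
    simp

/-- The canonical quotient map `X₀ → π₀(X)`. -/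
noncomputable def pi0π [HasCoequalizers C] (X : SimplexCategoryᵒᵖ ⥤ C) :
    X.obj (op ⦋0⦌) ⟶ pi0F.obj X :=
  coequalizer.π _ _

variable (C) in
/-- `Y ↦ ([k] ↦ π₀(Y_{k,−}))`. -/
noncomputable def rowsPi0F [HasCoequalizers C] :
    ((SimplexCategory × SimplexCategory)ᵒᵖ ⥤ C) ⥤ (SimplexCategoryᵒᵖ ⥤ C) :=
  rowsF C ⋙ (Functor.whiskeringRight _ _ _).obj pi0F

variable (C) in
/-- `Y ↦ ([k] ↦ π₀(Y_{−,k}))`. -/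
noncomputable def colsPi0F [HasCoequalizers C] :
    ((SimplexCategory × SimplexCategory)ᵒᵖ ⥤ C) ⥤ (SimplexCategoryᵒᵖ ⥤ C) :=
  colsF C ⋙ (Functor.whiskeringRight _ _ _).obj pi0F

variable (C) in
/-- The levelwise tensor `X ⊗ K` of a simplicial object with a simplicial set,
`(X ⊗ K)ₖ = ∐_{Kₖ} Xₖ`, as a functor in `X`. -/
noncomputable def tensorF [HasColimits C] (K : SSet.{v}) :
    (SimplexCategoryᵒᵖ ⥤ C) ⥤ (SimplexCategoryᵒᵖ ⥤ C) where
  obj X :=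
    { obj := fun n => ∐ (fun (_ : K.obj n) => X.obj n)
      map := fun {n m} f => Sigma.desc
        (fun s => X.map f ≫ Sigma.ι (fun (_ : K.obj m) => X.obj m) (K.map f s))
      map_id := fun n => by
        apply Sigma.hom_ext
        intro s
        simp [FunctorToTypes.map_id_apply]
      map_comp := fun {n m l} f g => by
        apply Sigma.hom_ext
        intro s
        simp [FunctorToTypes.map_comp_apply] }
  map {X Y} f :=
    { app := fun n => Limits.Sigma.desc
        (fun (s : K.obj n) => f.app n ≫ Sigma.ι (fun (_ : K.obj n) => Y.obj n) s)
      naturality := fun {n m} g => by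
        apply Sigma.hom_ext
        intro s
        simp }
  map_id X := by
    ext n : 2
    simp
  map_comp f g := by
    ext n : 2
    simp

variable (C) in
/-- The canonical projection `X ⊗ K ⟶ X`, induced by `K ⟶ Δ[0]`. -/
noncomputable def tensorProj [HasColimits C] (K : SSet.{v}) :
    tensorF C K ⟶ 𝟭 (SimplexCategoryᵒᵖ ⥤ C) where
  app X :=
    { app := fun n => Sigma.desc (fun _ => 𝟙 (X.obj n))
      naturality := fun {n m} g => by
        apply Sigma.hom_ext
        intro s
        simp [tensorF] }
  naturality {X Y} f := by
    ext n : 2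
    apply Sigma.hom_ext
    intro s
    simp [tensorF]



/-- The splitting index: `sigmaIdx β p` is the number of elements `j` of the source with
`β j < p`; equivalently `j_β + 1` where `j_β` is the largest index landing in the first block. -/
def sigmaIdx {m n : ℕ} (β : Fin m →o Fin n) (p : ℕ) : ℕ :=
  (Finset.univ.filter fun j : Fin m => ((β j) : ℕ) < p).card

theorem sigmaIdx_le {m n : ℕ} (β : Fin m →o Fin n) (p : ℕ) : sigmaIdx β p ≤ m := by
  classical
  exact le_trans (Finset.card_filter_le _ _) (by simp)

theorem lt_sigmaIdx_iff {m n : ℕ} (β : Fin m →o Fin n) (p : ℕ) (j : Fin m) :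
    (j : ℕ) < sigmaIdx β p ↔ ((β j) : ℕ) < p := by
  classical
  constructor
  · intro h
    by_contra hb
    push_neg at hb
    have hsub : (Finset.univ.filter fun j' : Fin m => ((β j') : ℕ) < p) ⊆ Finset.Iio j := by
      intro x hx
      simp only [Finset.mem_filter, Finset.mem_univ, true_and] at hx
      simp only [Finset.mem_Iio]
      by_contra hxj
      push_neg at hxj
      have hmono := β.monotone hxj
      rw [Fin.le_def] at hmono
      omega
    have hc := Finset.card_le_card hsub
    rw [Fin.card_Iio] at hc
    exact absurd h (by unfold sigmaIdx; omega)
  · intro h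
    have hsub : Finset.Iic j ⊆ (Finset.univ.filter fun j' : Fin m => ((β j') : ℕ) < p) := by
      intro x hx
      simp only [Finset.mem_Iic] at hx
      simp only [Finset.mem_filter, Finset.mem_univ, true_and]
      have hmono := β.monotone hx
      rw [Fin.le_def] at hmono
      omega
    have hc := Finset.card_le_card hsub
    rw [Fin.card_Iic] at hc
    unfold sigmaIdx
    omega

/-- The first component of the splitting of `β` at `p`. -/
def splitFst {m n : ℕ} (β : Fin m →o Fin n) (p : ℕ) : Fin (sigmaIdx β p) →o Fin p where
  toFun r := ⟨((β ⟨r.val, lt_of_lt_of_le r.2 (sigmaIdx_le β p)⟩) : ℕ),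
    (lt_sigmaIdx_iff β p _).mp r.2⟩
  monotone' := by
    intro a b hab
    have h := β.monotone (show (⟨a.val, lt_of_lt_of_le a.2 (sigmaIdx_le β p)⟩ : Fin m) ≤
      ⟨b.val, lt_of_lt_of_le b.2 (sigmaIdx_le β p)⟩ from hab)
    exact h

/-- The second component of the splitting of `β` at `p`. -/
def splitSnd {m n : ℕ} (β : Fin m →o Fin n) (p : ℕ) (hp : p ≤ n) :
    Fin (m - sigmaIdx β p) →o Fin (n - p) where
  toFun r := ⟨((β ⟨sigmaIdx β p + r.val, by have := r.2; omega⟩) : ℕ) - p, by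
    have h1 := (β ⟨sigmaIdx β p + r.val, by have := r.2; omega⟩).2
    have h2 : ¬ ((sigmaIdx β p + r.val) < sigmaIdx β p) := by omega
    have h3 := (lt_sigmaIdx_iff β p ⟨sigmaIdx β p + r.val, by have := r.2; omega⟩).not.mp
      (by simpa using h2)
    simp only [not_lt] at h3
    omega⟩
  monotone' := by
    intro a b hab
    have hav : a.val ≤ b.val := hab
    dsimp only
    simp only [Fin.mk_le_mk]
    apply Nat.sub_le_sub_right
    exact β.monotone (Fin.mk_le_mk.mpr (by omega))


variable {C : Type u} [Category.{v} C]

/-- The `p`-th summand `A_{p-1, b.len-p-1}` of the value of `(σₐ)_!A` at `b`. -/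
def sigmaAugSummand [HasColimits C] (A : (AugSimplex × AugSimplex)ᵒᵖ ⥤ C) (b : AugSimplex)
    (p : Fin (b.len + 1)) : C :=
  A.obj (op ((⟨p.val⟩ : AugSimplex), (⟨b.len - p.val⟩ : AugSimplex)))

/-- The matrix of the structure map of `(σₐ)_!A` induced by `β : a ⟶ b`: on the `p`-th summand
it is the structure map of `A` induced by the unique pair `(β₁, β₂)` with `σₐ(β₁, β₂) = β`,
landing in the `j_β(p)`-th summand. -/
noncomputable def sigmaAugMatrix [HasColimits C] (A : (AugSimplex × AugSimplex)ᵒᵖ ⥤ C)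
    {a b : AugSimplex} (β : a ⟶ b) :
    (∐ sigmaAugSummand A b) ⟶ (∐ sigmaAugSummand A a) :=
  Sigma.desc fun p =>
    A.map (Quiver.Hom.op
      ((splitFst (show Fin a.len →o Fin b.len from β) p.val,
        splitSnd (show Fin a.len →o Fin b.len from β) p.val (by have := p.2; omega)) :
        ((⟨sigmaIdx (show Fin a.len →o Fin b.len from β) p.val⟩ : AugSimplex),
          (⟨a.len - sigmaIdx (show Fin a.len →o Fin b.len from β) p.val⟩ : AugSimplex)) ⟶
        ((⟨p.val⟩ : AugSimplex), (⟨b.len - p.val⟩ : AugSimplex)))) ≫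
    Sigma.ι (sigmaAugSummand A a)
      ⟨sigmaIdx (show Fin a.len →o Fin b.len from β) p.val,
        by have := sigmaIdx_le (show Fin a.len →o Fin b.len from β) p.val; omega⟩

/-! ### Auxiliary lemmas -/

/-- View a morphism of `AugSimplex` as an order hom. -/
abbrev toOH {a b : AugSimplex} (f : a ⟶ b) : Fin a.len →o Fin b.len := f

theorem aug_hom_ext {a b : AugSimplex} {f g : a ⟶ b}
    (h : ∀ i : Fin a.len, ((toOH f) i : ℕ) = (toOH g) i) : f = g :=
  OrderHom.ext _ _ (funext fun i => Fin.ext (h i))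

theorem eqToHom_aug_apply {a b : AugSimplex} (h : a = b) (i : Fin a.len) :
    ((toOH (eqToHom h)) i : ℕ) = i := by
  subst h; rfl

theorem eqToHom_aug_unop_apply {z z' : AugSimplexᵒᵖ} (h : z = z') (i : Fin (unop z').len) :
    ((toOH (eqToHom h).unop) i : ℕ) = i := by
  subst h; rfl

theorem eqToHom_prod_fst_apply {z z' : AugSimplex × AugSimplex} (h : z = z')
    (i : Fin z.1.len) : ((toOH (eqToHom h).1) i : ℕ) = i := by
  subst h; rfl

theorem eqToHom_prod_snd_apply {z z' : AugSimplex × AugSimplex} (h : z = z')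
    (i : Fin z.2.len) : ((toOH (eqToHom h).2) i : ℕ) = i := by
  subst h; rfl

theorem sigmaIdx_eq {m n : ℕ} (β : Fin m →o Fin n) {p q : ℕ} (hq : q ≤ m)
    (h : ∀ j : Fin m, (j : ℕ) < q ↔ ((β j : ℕ) < p)) : sigmaIdx β p = q := by
  classical
  unfold sigmaIdx
  have he : (Finset.univ.filter fun j : Fin m => ((β j) : ℕ) < p)
      = Finset.univ.filter fun j : Fin m => (j : ℕ) < q := by
    ext j; simp [h j]
  rw [he]
  rcases eq_or_lt_of_le hq with rfl | hlt
  · have h2 : (Finset.univ.filter fun j : Fin q => (j : ℕ) < q) = Finset.univ := by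
      ext j; simp [j.2]
    rw [h2]; simp
  · have h2 : (Finset.univ.filter fun j : Fin m => (j : ℕ) < q) = Finset.Iio ⟨q, hlt⟩ := by
      ext j; simp [Fin.lt_def]
    rw [h2, Fin.card_Iio]

theorem sigmaIdx_comp {m n k : ℕ} (β : Fin m →o Fin n) (γ : Fin n →o Fin k) (p : ℕ) :
    sigmaIdx (γ.comp β) p = sigmaIdx β (sigmaIdx γ p) :=
  sigmaIdx_eq _ (sigmaIdx_le _ _) fun j => by
    rw [lt_sigmaIdx_iff, lt_sigmaIdx_iff]; rfl

theorem sigmaIdx_le_apply {m n : ℕ} (β : Fin m →o Fin n) (p : ℕ) (j : Fin m)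
    (h : sigmaIdx β p ≤ (j : ℕ)) : p ≤ ((β j) : ℕ) := by
  have h2 := lt_sigmaIdx_iff β p j
  omega

theorem sigmaIdx_of_val_id {m n : ℕ} (β : Fin m →o Fin n)
    (hβ : ∀ j, ((β j) : ℕ) = (j : ℕ)) {p : ℕ} (hp : p ≤ m) : sigmaIdx β p = p :=
  sigmaIdx_eq _ hp fun j => by rw [hβ]

theorem ordJoin_apply' {a b a' b' : ℕ} (F : Fin a →o Fin a') (G : Fin b →o Fin b')
    (x : Fin (a + b)) :
    ordJoin F G x = if h : (x : ℕ) < a then Fin.castAdd b' (F ⟨x, h⟩)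
      else Fin.natAdd a' (G ⟨(x : ℕ) - a, by omega⟩) := rfl

theorem sigmaIdx_ordJoin {m n m' n' : ℕ} (f : Fin m →o Fin m') (g : Fin n →o Fin n') :
    sigmaIdx (ordJoin f g) m' = m :=
  sigmaIdx_eq _ (by omega) fun j => by
    rw [ordJoin_apply']
    by_cases h : (j : ℕ) < m
    · simp only [dif_pos h, Fin.coe_castAdd]
      have := (f ⟨(j : ℕ), h⟩).2
      omega
    · simp only [dif_neg h, Fin.coe_natAdd]
      omega


theorem toOH_comp {a b c : AugSimplex} (f : a ⟶ b) (g : b ⟶ c) (i : Fin a.len) :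
    toOH (f ≫ g) i = toOH g (toOH f i) := rfl

theorem oh_val_congr {m n : ℕ} (f : Fin m →o Fin n) {i j : Fin m} (h : (i : ℕ) = (j : ℕ)) :
    ((f i) : ℕ) = f j := by
  have : i = j := Fin.ext h
  rw [this]

theorem ι_sigmaAugMatrix [HasColimits C] (A : (AugSimplex × AugSimplex)ᵒᵖ ⥤ C)
    {a b : AugSimplex} (β : a ⟶ b) (p : Fin (b.len + 1)) :
    Sigma.ι (sigmaAugSummand A b) p ≫ sigmaAugMatrix A β =
    A.map (Quiver.Hom.op
      ((splitFst (toOH β) p.val,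
        splitSnd (toOH β) p.val (by have := p.2; omega)) :
        ((⟨sigmaIdx (toOH β) p.val⟩ : AugSimplex),
          (⟨a.len - sigmaIdx (toOH β) p.val⟩ : AugSimplex)) ⟶
        ((⟨p.val⟩ : AugSimplex), (⟨b.len - p.val⟩ : AugSimplex)))) ≫
    Sigma.ι (sigmaAugSummand A a)
      ⟨sigmaIdx (toOH β) p.val, by have := sigmaIdx_le (toOH β) p.val; omega⟩ := by
  simp only [sigmaAugMatrix, Sigma.ι_desc]
  rfl

theorem entry_eq [HasColimits C] (A : (AugSimplex × AugSimplex)ᵒᵖ ⥤ C)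
    {a b : AugSimplex} (β : a ⟶ b) (p : Fin (b.len + 1))
    (x y : AugSimplex) (hxy : x.len + y.len = a.len)
    (u : ((x, y) : AugSimplex × AugSimplex) ⟶
      (((⟨p.val⟩ : AugSimplex), (⟨b.len - p.val⟩ : AugSimplex)) : AugSimplex × AugSimplex))
    (hq : x.len = sigmaIdx (toOH β) p.val)
    (h1 : ∀ i : Fin x.len, ((toOH u.1) i : ℕ) = (toOH β) ⟨i.val, by have := i.2; omega⟩)
    (h2 : ∀ i : Fin y.len, ((toOH u.2) i : ℕ)
        = (toOH β) ⟨x.len + i.val, by have := i.2; omega⟩ - p.val)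
    (hobj : A.obj (op (x, y)) = sigmaAugSummand A a ⟨x.len, by omega⟩) :
    A.map u.op ≫ eqToHom hobj ≫ Sigma.ι (sigmaAugSummand A a) ⟨x.len, by omega⟩ =
    Sigma.ι (sigmaAugSummand A b) p ≫ sigmaAugMatrix A β := by
  obtain ⟨xl⟩ := x
  obtain ⟨yl⟩ := y
  have hq' : xl = sigmaIdx (toOH β) p.val := hq
  have hyl : yl = a.len - xl := by
    have hxy' : xl + yl = a.len := hxy
    have := sigmaIdx_le (toOH β) p.val
    omega
  subst hyl
  subst hq'
  have hu : u = ((splitFst (toOH β) p.val, splitSnd (toOH β) p.val (by have := p.2; omega)) :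
      (((⟨sigmaIdx (toOH β) p.val⟩ : AugSimplex),
        (⟨a.len - sigmaIdx (toOH β) p.val⟩ : AugSimplex)) : AugSimplex × AugSimplex) ⟶
        ((⟨p.val⟩ : AugSimplex), (⟨b.len - p.val⟩ : AugSimplex))) := by
    have e1 : u.1 = splitFst (toOH β) p.val := by
      apply aug_hom_ext; intro i
      rw [h1 i]; rfl
    have e2 : u.2 = splitSnd (toOH β) p.val (by have := p.2; omega) := by
      apply aug_hom_ext; intro i
      rw [h2 i]; rfl
    exact Prod.ext e1 e2
  rw [hu, ι_sigmaAugMatrix]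
  have he : eqToHom hobj = 𝟙 _ := rfl
  erw [he, Category.id_comp]

theorem sigmaAugMatrix_id [HasColimits C] (A : (AugSimplex × AugSimplex)ᵒᵖ ⥤ C)
    (b : AugSimplex) : sigmaAugMatrix A (𝟙 b) = 𝟙 _ := by
  apply Sigma.hom_ext
  intro p
  rw [← entry_eq A (𝟙 b) p ⟨p.val⟩ ⟨b.len - p.val⟩
    (by show p.val + (b.len - p.val) = b.len; have := p.2; omega)
    (𝟙 _)
    (by have := p.2
        exact (sigmaIdx_of_val_id (toOH (𝟙 b)) (fun j => rfl) (by show (p : ℕ) ≤ b.len; omega)).symm)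
    (fun i => rfl)
    (fun i => by show (i : ℕ) = (p : ℕ) + (i : ℕ) - (p : ℕ); omega)
    rfl]
  simp [← prod_id]
  exact Category.id_comp _

theorem sigmaAugMatrix_comp [HasColimits C] (A : (AugSimplex × AugSimplex)ᵒᵖ ⥤ C)
    {a b c : AugSimplex} (β : a ⟶ b) (γ : b ⟶ c) :
    sigmaAugMatrix A (β ≫ γ) = sigmaAugMatrix A γ ≫ sigmaAugMatrix A β := by
  apply Sigma.hom_ext
  intro p
  conv_rhs => erw [← Category.assoc, ι_sigmaAugMatrix A γ p, Category.assoc,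
    ι_sigmaAugMatrix A β ⟨sigmaIdx (toOH γ) p.val,
      by have := sigmaIdx_le (toOH γ) p.val; omega⟩,
    ← Category.assoc, ← A.map_comp, ← op_comp]
  rw [← entry_eq A (β ≫ γ) p
    ⟨sigmaIdx (toOH β) (sigmaIdx (toOH γ) p.val)⟩
    ⟨a.len - sigmaIdx (toOH β) (sigmaIdx (toOH γ) p.val)⟩
    (by show sigmaIdx (toOH β) (sigmaIdx (toOH γ) p.val)
          + (a.len - sigmaIdx (toOH β) (sigmaIdx (toOH γ) p.val)) = a.len
        have := sigmaIdx_le (toOH β) (sigmaIdx (toOH γ) p.val); omega)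
    ((splitFst (toOH β) (sigmaIdx (toOH γ) p.val) ≫ splitFst (toOH γ) p.val,
      splitSnd (toOH β) (sigmaIdx (toOH γ) p.val)
        (by have := sigmaIdx_le (toOH γ) p.val; omega) ≫
      splitSnd (toOH γ) p.val (by have := p.2; omega)))
    (by show sigmaIdx (toOH β) (sigmaIdx (toOH γ) p.val) = _
        exact (sigmaIdx_comp (toOH β) (toOH γ) p.val).symm)
    (fun i => rfl)
    (fun i => by
      have hi : (i : ℕ) < a.len - sigmaIdx (toOH β) (sigmaIdx (toOH γ) p.val) := i.2
      have hsl := sigmaIdx_le (toOH β) (sigmaIdx (toOH γ) p.val)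
      dsimp only
      rw [toOH_comp β γ, toOH_comp]
      dsimp only [toOH, splitSnd, OrderHom.coe_mk]
      have hge : sigmaIdx (toOH γ) p.val ≤
          ((toOH β) ⟨sigmaIdx (toOH β) (sigmaIdx (toOH γ) p.val) + (i : ℕ), by omega⟩ : ℕ) :=
        sigmaIdx_le_apply _ _ _ (Nat.le_add_right _ _)
      exact congrArg (fun t => t - p.val) (oh_val_congr (toOH γ)
        (i := ⟨sigmaIdx (toOH γ) p.val + (((toOH β) ⟨sigmaIdx (toOH β) (sigmaIdx (toOH γ) p.val)
          + (i : ℕ), by omega⟩ : ℕ) - sigmaIdx (toOH γ) p.val),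
          by rw [Nat.add_sub_cancel' hge]; exact Fin.isLt _⟩)
        (Nat.add_sub_cancel' hge)))
    rfl]
  simp [prod_comp]
  erw [eqToHom_refl, Category.id_comp]
  rfl

theorem split_recon {a b : AugSimplex} (β : a ⟶ b) (p : Fin (b.len + 1))
    (ha : a = (⟨sigmaIdx (toOH β) p.val + (a.len - sigmaIdx (toOH β) p.val)⟩ : AugSimplex))
    (hb : b = (⟨p.val + (b.len - p.val)⟩ : AugSimplex)) :
    eqToHom ha ≫ ordSumAug.map
      ((splitFst (toOH β) p.val, splitSnd (toOH β) p.val (by have := p.2; omega)) :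
        (((⟨sigmaIdx (toOH β) p.val⟩ : AugSimplex),
          (⟨a.len - sigmaIdx (toOH β) p.val⟩ : AugSimplex)) : AugSimplex × AugSimplex) ⟶
        ((⟨p.val⟩ : AugSimplex), (⟨b.len - p.val⟩ : AugSimplex)))
    = β ≫ eqToHom hb := by
  apply aug_hom_ext
  intro i
  erw [toOH_comp, toOH_comp, eqToHom_aug_apply]
  have hsl := sigmaIdx_le (toOH β) p.val
  set j := toOH (eqToHom ha) i with hjdef
  have hval : (j : ℕ) = (i : ℕ) := eqToHom_aug_apply ha i
  have hj2 : (j : ℕ) < sigmaIdx (toOH β) p.val + (a.len - sigmaIdx (toOH β) p.val) := j.2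
  dsimp only [toOH, ordSumAug]
  erw [ordJoin_apply']
  by_cases hc : (j : ℕ) < sigmaIdx (toOH β) p.val
  · rw [dif_pos hc]
    dsimp only [splitFst, OrderHom.coe_mk, Fin.coe_castAdd]
    exact oh_val_congr (toOH β) hval
  · rw [dif_neg hc]
    dsimp only [splitSnd, OrderHom.coe_mk, Fin.coe_natAdd]
    have hge : p.val ≤ ((toOH β) ⟨sigmaIdx (toOH β) p.val + ((j : ℕ) - sigmaIdx (toOH β) p.val),
        by omega⟩ : ℕ) :=
      sigmaIdx_le_apply _ _ _ (Nat.le_add_right _ _)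
    show p.val + (((toOH β) ⟨sigmaIdx (toOH β) p.val + ((j : ℕ) - sigmaIdx (toOH β) p.val),
      by omega⟩ : ℕ) - p.val) = _
    rw [Nat.add_sub_cancel' hge]
    exact oh_val_congr (toOH β)
      (show sigmaIdx (toOH β) p.val + ((j : ℕ) - sigmaIdx (toOH β) p.val) = (i : ℕ) by omega)

theorem ι_desc_assoc' {β : Type*} {f : β → C} [HasCoproduct f] {P T : C}
    (g : ∀ b, f b ⟶ P) (b : β) (h : P ⟶ T) :
    Sigma.ι f b ≫ Sigma.desc g ≫ h = g b ≫ h := by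
  rw [← Category.assoc, Sigma.ι_desc]

theorem ι_sigmaAugMatrix_assoc [HasColimits C] (A : (AugSimplex × AugSimplex)ᵒᵖ ⥤ C)
    {a b : AugSimplex} (β : a ⟶ b) (p : Fin (b.len + 1)) {T : C}
    (h : (∐ sigmaAugSummand A a) ⟶ T) :
    Sigma.ι (sigmaAugSummand A b) p ≫ sigmaAugMatrix A β ≫ h =
    A.map (Quiver.Hom.op
      ((splitFst (toOH β) p.val,
        splitSnd (toOH β) p.val (by have := p.2; omega)) :
        ((⟨sigmaIdx (toOH β) p.val⟩ : AugSimplex),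
          (⟨a.len - sigmaIdx (toOH β) p.val⟩ : AugSimplex)) ⟶
        ((⟨p.val⟩ : AugSimplex), (⟨b.len - p.val⟩ : AugSimplex)))) ≫
    Sigma.ι (sigmaAugSummand A a)
      ⟨sigmaIdx (toOH β) p.val, by have := sigmaIdx_le (toOH β) p.val; omega⟩ ≫ h := by
  erw [← Category.assoc, ι_sigmaAugMatrix, Category.assoc]
  rfl

variable (C) in
/-- The explicit model for `(σₐ)_!`. -/
noncomputable def sigmaShift [HasColimits C] :
    ((AugSimplex × AugSimplex)ᵒᵖ ⥤ C) ⥤ (AugSimplexᵒᵖ ⥤ C) where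
  obj A :=
    { obj := fun b => ∐ sigmaAugSummand A (unop b)
      map := fun f => sigmaAugMatrix A f.unop
      map_id := fun b => sigmaAugMatrix_id A (unop b)
      map_comp := fun f g => sigmaAugMatrix_comp A g.unop f.unop }
  map {A A'} η :=
    { app := fun b => Sigma.desc fun p =>
        η.app (op ((⟨p.val⟩ : AugSimplex), (⟨(unop b).len - p.val⟩ : AugSimplex))) ≫
          Sigma.ι (sigmaAugSummand A' (unop b)) p
      naturality := fun {b b'} f => by
        dsimp only
        apply Sigma.hom_ext
        intro p
        erw [ι_sigmaAugMatrix_assoc, Sigma.ι_desc, ι_desc_assoc']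
        conv_rhs => erw [Category.assoc, ι_sigmaAugMatrix]
        conv_lhs => erw [← Category.assoc, NatTrans.naturality, Category.assoc]
        rfl }
  map_id A := by
    ext b : 2
    apply Sigma.hom_ext
    intro p
    simp only [NatTrans.id_app, Sigma.ι_desc, Category.comp_id]
    exact Category.id_comp _
  map_comp f g := by
    ext b : 2
    apply Sigma.hom_ext
    intro p
    simp only [NatTrans.comp_app, Sigma.ι_desc, Category.assoc, ι_desc_assoc']
    erw [Category.assoc, Category.assoc, Sigma.ι_desc]
    rfl

theorem ordJoin_apply_left {m n m' n' : ℕ} (f : Fin m →o Fin m') (g : Fin n →o Fin n')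
    (i : Fin (m + n)) (h : (i : ℕ) < m) : ((ordJoin f g) i : ℕ) = f ⟨(i : ℕ), h⟩ := by
  rw [ordJoin_apply']
  rw [dif_pos h]
  simp

theorem ordJoin_apply_right_sub {m n m' n' : ℕ} (f : Fin m →o Fin m') (g : Fin n →o Fin n')
    (i : Fin (m + n)) (h : ¬ (i : ℕ) < m) (k : ℕ) (hk : k = m') :
    ((ordJoin f g) i : ℕ) - k = g ⟨(i : ℕ) - m, by have := i.2; omega⟩ := by
  rw [ordJoin_apply']
  rw [dif_neg h]
  simp [hk]

theorem pair_comp_eqToHom {z w : AugSimplex × AugSimplex} (f : z ⟶ w)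
    {w' : AugSimplex × AugSimplex} (h : w = w') :
    ((f.1 ≫ (eqToHom h).1, f.2 ≫ (eqToHom h).2) : z ⟶ w') = f ≫ eqToHom h := by
  subst h
  obtain ⟨f1, f2⟩ := f
  simp [prod_id]

theorem pair_eta (x y : AugSimplex) :
    ((x, y) : AugSimplex × AugSimplex) =
      ((⟨x.len⟩ : AugSimplex), (⟨x.len + y.len - x.len⟩ : AugSimplex)) := by
  obtain ⟨yl⟩ := y
  have h : x.len + yl - x.len = yl := by omega
  rw [h]

theorem summand_obj_eq [HasColimits C] (A : (AugSimplex × AugSimplex)ᵒᵖ ⥤ C)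
    (x y : AugSimplex) :
    A.obj (op (x, y)) = sigmaAugSummand A (⟨x.len + y.len⟩ : AugSimplex)
      ⟨x.len, by show x.len < x.len + y.len + 1; omega⟩ :=
  congrArg A.obj (congrArg op (pair_eta x y))

theorem entry_eq_assoc [HasColimits C] (A : (AugSimplex × AugSimplex)ᵒᵖ ⥤ C)
    {a b : AugSimplex} (β : a ⟶ b) (p : Fin (b.len + 1))
    (x y : AugSimplex) (hxy : x.len + y.len = a.len)
    (u : ((x, y) : AugSimplex × AugSimplex) ⟶
      (((⟨p.val⟩ : AugSimplex), (⟨b.len - p.val⟩ : AugSimplex)) : AugSimplex × AugSimplex))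
    (hq : x.len = sigmaIdx (toOH β) p.val)
    (h1 : ∀ i : Fin x.len, ((toOH u.1) i : ℕ) = (toOH β) ⟨i.val, by have := i.2; omega⟩)
    (h2 : ∀ i : Fin y.len, ((toOH u.2) i : ℕ)
        = (toOH β) ⟨x.len + i.val, by have := i.2; omega⟩ - p.val)
    (hobj : A.obj (op (x, y)) = sigmaAugSummand A a ⟨x.len, by omega⟩)
    {T : C} (h : (∐ sigmaAugSummand A a) ⟶ T) :
    A.map u.op ≫ eqToHom hobj ≫ Sigma.ι (sigmaAugSummand A a) ⟨x.len, by omega⟩ ≫ h =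
    Sigma.ι (sigmaAugSummand A b) p ≫ sigmaAugMatrix A β ≫ h := by
  have key := entry_eq A β p x y hxy u hq h1 h2 hobj
  have key2 := congrArg (fun t => t ≫ h) key
  simp only [Category.assoc] at key2
  exact key2.trans (Category.assoc _ _ _)

/-- The forward hom-equivalence. -/
noncomputable def toUp [HasColimits C] (A : (AugSimplex × AugSimplex)ᵒᵖ ⥤ C)
    (X : AugSimplexᵒᵖ ⥤ C) (φ : (sigmaShift C).obj A ⟶ X) :
    A ⟶ ordSumAug.op ⋙ X where
  app z :=
    eqToHom (summand_obj_eq A (unop z).1 (unop z).2) ≫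
    Sigma.ι (sigmaAugSummand A (⟨(unop z).1.len + (unop z).2.len⟩ : AugSimplex))
      ⟨(unop z).1.len, by show (unop z).1.len < (unop z).1.len + (unop z).2.len + 1; omega⟩ ≫
    φ.app (op (⟨(unop z).1.len + (unop z).2.len⟩ : AugSimplex))
  naturality := fun {z z'} w => by
    dsimp only
    have hpair : unop z = ((⟨(unop z).1.len⟩ : AugSimplex),
        (⟨(unop z).1.len + (unop z).2.len - (unop z).1.len⟩ : AugSimplex)) :=
      pair_eta (unop z).1 (unop z).2
    have hnat := φ.naturality (show (op (⟨(unop z).1.len + (unop z).2.len⟩ : AugSimplex) ⟶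
        op (⟨(unop z').1.len + (unop z').2.len⟩ : AugSimplex)) from
      Quiver.Hom.op (ordSumAug.map w.unop))
    have hF : ((sigmaShift C).obj A).map (show (op (⟨(unop z).1.len + (unop z).2.len⟩ : AugSimplex) ⟶
        op (⟨(unop z').1.len + (unop z').2.len⟩ : AugSimplex)) from
      Quiver.Hom.op (ordSumAug.map w.unop)) =
        sigmaAugMatrix A (ordSumAug.map w.unop) := rfl
    rw [hF] at hnat
    have hXmap : (ordSumAug.op ⋙ X).map w = X.map (show (op (⟨(unop z).1.len + (unop z).2.len⟩ : AugSimplex) ⟶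
        op (⟨(unop z').1.len + (unop z').2.len⟩ : AugSimplex)) from
      Quiver.Hom.op (ordSumAug.map w.unop)) := rfl
    rw [hXmap]
    conv_rhs => erw [Category.assoc, Category.assoc, ← hnat]
    erw [← entry_eq_assoc A
        (show ((⟨(unop z').1.len + (unop z').2.len⟩ : AugSimplex) ⟶
          (⟨(unop z).1.len + (unop z).2.len⟩ : AugSimplex)) from ordSumAug.map w.unop)
        ⟨(unop z).1.len, by show (unop z).1.len < (unop z).1.len + (unop z).2.len + 1; omega⟩
        (unop z').1 (unop z').2 rfl
        (w.unop ≫ eqToHom hpair)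
        ((sigmaIdx_ordJoin (toOH w.unop.1) (toOH w.unop.2)).symm)
        (fun i => by
          have e1 : (w.unop ≫ eqToHom hpair).1 = w.unop.1 ≫ (eqToHom hpair).1 := rfl
          rw [e1, toOH_comp, eqToHom_prod_fst_apply]
          dsimp only [toOH, ordSumAug]
          rw [ordJoin_apply_left])
        (fun i => by
          have e2 : (w.unop ≫ eqToHom hpair).2 = w.unop.2 ≫ (eqToHom hpair).2 := rfl
          rw [e2, toOH_comp, eqToHom_prod_snd_apply]
          dsimp only [toOH, ordSumAug]
          rw [ordJoin_apply_right_sub]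
          · exact oh_val_congr _
              (show (i : ℕ) = (unop z').1.len + (i : ℕ) - (unop z').1.len by omega)
          · show ¬ ((unop z').1.len + (i : ℕ) < (unop z').1.len); omega
          · rfl)
        (summand_obj_eq A (unop z').1 (unop z').2)
        (φ.app (op (⟨(unop z').1.len + (unop z').2.len⟩ : AugSimplex)))]
    rw [op_comp, Quiver.Hom.op_unop, A.map_comp, eqToHom_op, eqToHom_map]
    simp [eqToHom_trans]
    conv_rhs => erw [← Category.assoc, eqToHom_trans, eqToHom_refl, Category.id_comp]
    rfl

theorem aug_len_ext {a b : AugSimplex} (h : a.len = b.len) : a = b := by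
  obtain ⟨al⟩ := a
  obtain ⟨bl⟩ := b
  have h' : al = bl := h
  rw [h']

/-- The backward hom-equivalence. -/
noncomputable def toDown [HasColimits C] (A : (AugSimplex × AugSimplex)ᵒᵖ ⥤ C)
    (X : AugSimplexᵒᵖ ⥤ C) (ψ : A ⟶ ordSumAug.op ⋙ X) :
    (sigmaShift C).obj A ⟶ X where
  app b := Sigma.desc fun p =>
    ψ.app (op ((⟨p.val⟩ : AugSimplex), (⟨(unop b).len - p.val⟩ : AugSimplex))) ≫
    X.map (eqToHom (show op (⟨p.val + ((unop b).len - p.val)⟩ : AugSimplex) = b from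
      congrArg op (aug_len_ext (show p.val + ((unop b).len - p.val) = (unop b).len from by
        have := p.2; omega))))
  naturality := fun {b b'} f => by
    apply Sigma.hom_ext
    intro p
    have hm : ((sigmaShift C).obj A).map f = sigmaAugMatrix A f.unop := rfl
    erw [hm, ι_sigmaAugMatrix_assoc, Sigma.ι_desc, ι_desc_assoc', Category.assoc, ← X.map_comp]
    conv_lhs => erw [← Category.assoc, NatTrans.naturality, Category.assoc]
    have hc : (ordSumAug.op ⋙ X).map (Quiver.Hom.op
        ((splitFst (toOH f.unop) p.val,
          splitSnd (toOH f.unop) p.val (by have := p.2; omega)) :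
          ((⟨sigmaIdx (toOH f.unop) p.val⟩ : AugSimplex),
            (⟨(unop b').len - sigmaIdx (toOH f.unop) p.val⟩ : AugSimplex)) ⟶
          ((⟨p.val⟩ : AugSimplex), (⟨(unop b).len - p.val⟩ : AugSimplex)))) =
        X.map (Quiver.Hom.op (ordSumAug.map
          ((splitFst (toOH f.unop) p.val,
            splitSnd (toOH f.unop) p.val (by have := p.2; omega)) :
            ((⟨sigmaIdx (toOH f.unop) p.val⟩ : AugSimplex),
              (⟨(unop b').len - sigmaIdx (toOH f.unop) p.val⟩ : AugSimplex)) ⟶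
            ((⟨p.val⟩ : AugSimplex), (⟨(unop b).len - p.val⟩ : AugSimplex))))) := rfl
    rw [hc, ← X.map_comp]
    congr 1
    congr 1
    apply Quiver.Hom.unop_inj
    simp only [unop_comp, eqToHom_unop, Quiver.Hom.unop_op]
    erw [eqToHom_unop, eqToHom_unop]
    exact split_recon f.unop p
      (aug_len_ext (show (unop b').len = sigmaIdx (toOH f.unop) p.val
          + ((unop b').len - sigmaIdx (toOH f.unop) p.val) from by
        have := sigmaIdx_le (toOH f.unop) p.val; omega))
      (aug_len_ext (show (unop b).len = p.val + ((unop b).len - p.val) from by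
        have := p.2; omega))

theorem toDown_toUp [HasColimits C] (A : (AugSimplex × AugSimplex)ᵒᵖ ⥤ C)
    (X : AugSimplexᵒᵖ ⥤ C) (φ : (sigmaShift C).obj A ⟶ X) :
    toDown A X (toUp A X φ) = φ := by
  ext b : 2
  apply Sigma.hom_ext
  intro p
  dsimp only [toDown, toUp]
  rw [Sigma.ι_desc]
  have he : op ((⟨p.val + ((unop b).len - p.val)⟩ : AugSimplex)) = b :=
    congrArg op (aug_len_ext (show p.val + ((unop b).len - p.val) = (unop b).len from by
      have := p.2; omega))
  erw [Category.assoc, Category.assoc, ← φ.naturality (eqToHom he)]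
  have hm : ((sigmaShift C).obj A).map (eqToHom he) = sigmaAugMatrix A (eqToHom he).unop := rfl
  rw [hm]
  have hu : (((⟨p.val⟩ : AugSimplex), (⟨(unop b).len - p.val⟩ : AugSimplex)) :
      AugSimplex × AugSimplex) =
      ((⟨p.val⟩ : AugSimplex), (⟨p.val + ((unop b).len - p.val) - p.val⟩ : AugSimplex)) :=
    Prod.ext rfl (aug_len_ext (show (unop b).len - p.val
      = p.val + ((unop b).len - p.val) - p.val from by omega))
  erw [← entry_eq_assoc A ((eqToHom he).unop)
      ⟨p.val, by show p.val < p.val + ((unop b).len - p.val) + 1; omega⟩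
      ⟨p.val⟩ ⟨(unop b).len - p.val⟩
      (by show p.val + ((unop b).len - p.val) = (unop b).len; have := p.2; omega)
      (eqToHom hu)
      ((sigmaIdx_of_val_id (toOH (eqToHom he).unop)
        (fun j => eqToHom_aug_unop_apply he j)
        (by show p.val ≤ (unop b).len; have := p.2; omega)).symm)
      (fun i => by rw [eqToHom_prod_fst_apply, eqToHom_aug_unop_apply])
      (fun i => by
        rw [eqToHom_prod_snd_apply, eqToHom_aug_unop_apply]
        show (i : ℕ) = p.val + (i : ℕ) - p.val
        omega)
      rfl
      (φ.app b)]
  simp [eqToHom_op, eqToHom_map, eqToHom_trans]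
  erw [eqToHom_trans_assoc, eqToHom_trans_assoc, eqToHom_refl, Category.id_comp]

theorem toUp_toDown [HasColimits C] (A : (AugSimplex × AugSimplex)ᵒᵖ ⥤ C)
    (X : AugSimplexᵒᵖ ⥤ C) (ψ : A ⟶ ordSumAug.op ⋙ X) :
    toUp A X (toDown A X ψ) = ψ := by
  ext z : 2
  dsimp only [toDown, toUp]
  erw [Sigma.ι_desc]
  have hm : z = op (((⟨(unop z).1.len⟩ : AugSimplex),
      (⟨(unop z).1.len + (unop z).2.len - (unop z).1.len⟩ : AugSimplex))) :=
    congrArg op (pair_eta (unop z).1 (unop z).2)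
  have hmap : (eqToHom (summand_obj_eq A (unop z).1 (unop z).2) :
      A.obj z ⟶ _) = A.map (eqToHom hm) := by rw [eqToHom_map]; rfl
  erw [hmap, ← Category.assoc, NatTrans.naturality, Category.assoc, eqToHom_map]
  simp [eqToHom_map, eqToHom_trans]
  erw [eqToHom_map, eqToHom_trans, eqToHom_refl, Category.comp_id]
variable (C) in
/-- The adjunction between the explicit model and restriction along the ordinal sum. -/
noncomputable def sigmaShiftAdj [HasColimits C] :
    sigmaShift C ⊣ (Functor.whiskeringLeft (AugSimplex × AugSimplex)ᵒᵖ AugSimplexᵒᵖ C).obj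
      ordSumAug.op :=
  Adjunction.mkOfHomEquiv
    { homEquiv := fun A X =>
        { toFun := toUp A X
          invFun := toDown A X
          left_inv := toDown_toUp A X
          right_inv := toUp_toDown A X }
      homEquiv_naturality_left_symm := fun {A' A X} f ψ => by
        ext b : 2
        apply Sigma.hom_ext
        intro p
        dsimp only [toDown, sigmaShift, Equiv.coe_fn_symm_mk, NatTrans.comp_app]
        erw [Equiv.coe_fn_symm_mk, Equiv.coe_fn_symm_mk]
        dsimp only [toDown]
        erw [Sigma.ι_desc, ι_desc_assoc', Category.assoc, Category.assoc, Sigma.ι_desc]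
        rfl
      homEquiv_naturality_right := fun {A X X'} φ g => by
        ext z : 2
        dsimp only [toUp, Equiv.coe_fn_mk, NatTrans.comp_app, Functor.whiskeringLeft, Functor.whiskerLeft]
        simp only [Category.assoc]
        erw [Category.assoc]
        rfl }

/-- **Proposition 2.11 (`sigmaa!`).**
Let `C` be a cocomplete category.  The left adjoint `(σₐ)_!` of the restriction `(σₐ)*` along
the ordinal sum `σₐ : Δₐ × Δₐ ⥤ Δₐ` is given levelwise by
`((σₐ)_!A)ₖ ≅ ∐_{i=−1}^{k} A_{i,k−i−1}`, and for `β : [l] ⟶ [k]` the induced structure map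
acts on the `i`-th summand as the structure map of `A` induced by the unique pair
`(β₁, β₂)` with `σₐ(β₁, β₂) = β`, landing in the `j_β(i)`-th summand. -/
theorem leftAdjoint_of_ordinal_sum_restriction
    [HasColimits C]
    (L : ((AugSimplex × AugSimplex)ᵒᵖ ⥤ C) ⥤ (AugSimplexᵒᵖ ⥤ C))
    (adj : L ⊣ (Functor.whiskeringLeft (AugSimplex × AugSimplex)ᵒᵖ AugSimplexᵒᵖ C).obj ordSumAug.op)
    (A : (AugSimplex × AugSimplex)ᵒᵖ ⥤ C) :
    ∃ e : ∀ b : AugSimplex, (L.obj A).obj (op b) ≅ ∐ sigmaAugSummand A b,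
      ∀ (a b : AugSimplex) (β : a ⟶ b),
        (L.obj A).map β.op = (e b).hom ≫ sigmaAugMatrix A β ≫ (e a).inv := by
  classical
  let I : L ≅ sigmaShift C := Adjunction.leftAdjointUniq adj (sigmaShiftAdj C)
  refine ⟨fun b => (I.app A).app (op b), ?_⟩
  intro a b β
  have hnat := (I.hom.app A).naturality β.op
  have hmm : ((sigmaShift C).obj A).map β.op = sigmaAugMatrix A β := rfl
  rw [hmm] at hnat
  erw [← Category.assoc, Iso.eq_comp_inv]
  exact hnat


end OrdSum
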